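/- Let (A_i, B_i), i = 1, …, N, be matrix pairs and define the subspace Ω̄ = Σ over k = 1,…,N and over exponent tuples j_k,…,j_N ∈ {0,…,n−1} of A_N^{j_N} A_{N-1}^{j_{N-1}} ⋯ A_k^{j_k} (range B_k). Then for all h_1, …, h_N ∈ ℝ, the reachable subspace Ω_{h} = ⟨A_N|B_N⟩ + Σ_{j=2}^{N} (e^{A_N h_N} ⋯ e^{A_j h_j}) ⟨A_{j-1}|B_{j-1}⟩ is contained in Ω̄. -/

import Mathlib

open MeasureTheory

/-- The controllable subspace `⟨A|B⟩ = Σ_{i=0}^{n-1} A^i (range B)`. -/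
def ctrlSub {n m : ℕ} (A : Matrix (Fin n) (Fin n) ℝ) (B : Matrix (Fin n) (Fin m) ℝ) :
    Submodule ℝ (Fin n → ℝ) :=
  ⨆ i : Fin n, Submodule.map ((A ^ (i : ℕ)).mulVecLin) (LinearMap.range B.mulVecLin)

/-- `Γ_A V = Σ_{i=0}^{n-1} A^i V`. -/
def gammaSub {n : ℕ} (A : Matrix (Fin n) (Fin n) ℝ) (V : Submodule ℝ (Fin n → ℝ)) :
    Submodule ℝ (Fin n → ℝ) :=
  ⨆ i : Fin n, Submodule.map ((A ^ (i : ℕ)).mulVecLin) V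

/-- Descending ordered product `E (b-1) * E (b-2) * ⋯ * E a` (equals `1` if `b ≤ a`). -/
def descProd {n : ℕ} (E : ℕ → Matrix (Fin n) (Fin n) ℝ) (a : ℕ) : ℕ → Matrix (Fin n) (Fin n) ℝ
  | 0 => 1
  | b + 1 => if a ≤ b then E b * descProd E a b else 1

/-- Ascending ordered product `F 0 * F 1 * ⋯ * F (b-1)`. -/
def ascProd {n : ℕ} (F : ℕ → Matrix (Fin n) (Fin n) ℝ) : ℕ → Matrix (Fin n) (Fin n) ℝ
  | 0 => 1
  | b + 1 => ascProd F b * F b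

/-- `Ω̄`: the sum, over `k = 0, …, N-1` and all exponent tuples with entries `< n`, of
`A_{N-1}^{j_{N-1}} ⋯ A_k^{j_k} (range B_k)` (subsystems indexed from `0`). -/
def omegaBar {n : ℕ} (N : ℕ) (m : ℕ → ℕ) (A : ℕ → Matrix (Fin n) (Fin n) ℝ)
    (B : ∀ i, Matrix (Fin n) (Fin (m i)) ℝ) : Submodule ℝ (Fin n → ℝ) :=
  ⨆ k ∈ Finset.range N, ⨆ j : {f : ℕ → ℕ // ∀ i, f i < n},
    Submodule.map (descProd (fun i => A i ^ j.1 i) k N).mulVecLin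
      (LinearMap.range (B k).mulVecLin)


open Polynomial in
lemma myPow_mem_span {n : ℕ} (M : Matrix (Fin n) (Fin n) ℝ) (k : ℕ) :
    M ^ k ∈ Submodule.span ℝ (Set.range fun i : Fin n => M ^ (i : ℕ)) := by
  rcases Nat.eq_zero_or_pos n with rfl | hn
  · rw [Subsingleton.elim (M ^ k) 0]; exact zero_mem _
  have hm : M.charpoly.Monic := M.charpoly_monic
  have hne : M.charpoly ≠ 1 := by
    intro hc
    have := M.charpoly_natDegree_eq_dim
    rw [hc] at this
    simp [Fintype.card_fin] at this
    omega
  have hdeg : ((X : ℝ[X]) ^ k %ₘ M.charpoly).natDegree < n := by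
    have := Polynomial.natDegree_modByMonic_lt ((X : ℝ[X]) ^ k) hm hne
    rwa [M.charpoly_natDegree_eq_dim, Fintype.card_fin] at this
  have heq : M ^ k = Polynomial.aeval M ((X : ℝ[X]) ^ k %ₘ M.charpoly) := by
    rw [Polynomial.aeval_modByMonic_eq_self_of_root M.aeval_self_charpoly]
    simp
  rw [heq, Polynomial.aeval_eq_sum_range' hdeg]
  exact Submodule.sum_mem _ fun i hi => Submodule.smul_mem _ _
    (Submodule.subset_span ⟨⟨i, Finset.mem_range.mp hi⟩, rfl⟩)

lemma myExp_mem_span {n : ℕ} (M : Matrix (Fin n) (Fin n) ℝ) :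
    NormedSpace.exp M ∈ Submodule.span ℝ (Set.range fun i : Fin n => M ^ (i : ℕ)) := by
  letI : SeminormedRing (Matrix (Fin n) (Fin n) ℝ) := Matrix.linftyOpSemiNormedRing
  letI : NormedRing (Matrix (Fin n) (Fin n) ℝ) := Matrix.linftyOpNormedRing
  letI : NormedAlgebra ℝ (Matrix (Fin n) (Fin n) ℝ) := Matrix.linftyOpNormedAlgebra
  have hsum :=
    NormedSpace.exp_series_hasSum_exp' (𝕂 := ℝ) M
  have hfd : FiniteDimensional ℝ (Submodule.span ℝ
      (Set.range fun i : Fin n => M ^ (i : ℕ))) :=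
    FiniteDimensional.span_of_finite ℝ (Set.finite_range _)
  have hclosed : IsClosed ((Submodule.span ℝ
      (Set.range fun i : Fin n => M ^ (i : ℕ)) : Submodule ℝ _) : Set (Matrix (Fin n) (Fin n) ℝ)) :=
    Submodule.closed_of_finiteDimensional _
  refine hclosed.mem_of_tendsto hsum.tendsto_sum_nat (Filter.Eventually.of_forall fun K => ?_)
  exact Submodule.sum_mem _ fun k _ => Submodule.smul_mem _ _ (myPow_mem_span M k)

lemma myMap_le_iSup {n : ℕ} {ι : Type*} (f : ι → Matrix (Fin n) (Fin n) ℝ)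
    {M : Matrix (Fin n) (Fin n) ℝ} (hM : M ∈ Submodule.span ℝ (Set.range f))
    (V : Submodule ℝ (Fin n → ℝ)) :
    Submodule.map M.mulVecLin V ≤ ⨆ j, Submodule.map (f j).mulVecLin V := by
  rintro x ⟨v, hv, rfl⟩
  induction hM using Submodule.span_induction with
  | mem y hy =>
    obtain ⟨j, rfl⟩ := hy
    exact Submodule.mem_iSup_of_mem j ⟨v, hv, rfl⟩
  | zero => simp
  | add y z _ _ hy hz =>
    simpa [Matrix.mulVecLin_apply, Matrix.add_mulVec] using add_mem hy hz
  | smul c y _ hy =>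
    simpa [Matrix.mulVecLin_apply, Matrix.smul_mulVec] using
      Submodule.smul_mem _ c hy

lemma descProd_self {n : ℕ} (E : ℕ → Matrix (Fin n) (Fin n) ℝ) (a : ℕ) :
    descProd E a a = 1 := by
  cases a with
  | zero => rfl
  | succ b => simp [descProd]

lemma descProd_succ_of_le {n : ℕ} (E : ℕ → Matrix (Fin n) (Fin n) ℝ) {a b : ℕ} (h : a ≤ b) :
    descProd E a (b + 1) = E b * descProd E a b := by
  simp [descProd, h]

lemma descProd_congr {n : ℕ} {E F : ℕ → Matrix (Fin n) (Fin n) ℝ} {a : ℕ} (b : ℕ)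
    (h : ∀ i, a ≤ i → i < b → E i = F i) : descProd E a b = descProd F a b := by
  induction b with
  | zero => rfl
  | succ b ih =>
    simp only [descProd]
    split_ifs with hab
    · rw [h b hab (Nat.lt_succ_self b),
        ih fun i h1 h2 => h i h1 (h2.trans (Nat.lt_succ_self b))]
    · rfl

lemma myKey {n : ℕ} (A E : ℕ → Matrix (Fin n) (Fin n) ℝ)
    (hE : ∀ b, E b ∈ Submodule.span ℝ (Set.range fun p : Fin n => A b ^ (p : ℕ)))
    (W : Submodule ℝ (Fin n → ℝ)) (k : ℕ) (i : Fin n) :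
    ∀ b, k < b →
      Submodule.map (descProd E (k + 1) b * A k ^ (i : ℕ)).mulVecLin W ≤
        ⨆ j : {f : ℕ → ℕ // ∀ l, f l < n},
          Submodule.map (descProd (fun l => A l ^ j.1 l) k b).mulVecLin W := by
  intro b
  induction b with
  | zero => omega
  | succ b ih =>
    intro hkb
    rcases Nat.lt_or_ge k b with hlt | hge
    · rw [descProd_succ_of_le E hlt, mul_assoc, Matrix.mulVecLin_mul, Submodule.map_comp]
      refine le_trans (Submodule.map_mono (ih hlt)) ?_
      rw [Submodule.map_iSup]
      refine iSup_le fun j => ?_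
      refine le_trans (myMap_le_iSup (fun p : Fin n => A b ^ (p : ℕ)) (hE b) _) ?_
      refine iSup_le fun p => ?_
      have hval : ∀ l, Function.update j.1 b (p : ℕ) l < n := by
        intro l
        rcases eq_or_ne l b with rfl | hl
        · simpa using p.isLt
        · simpa [Function.update, hl] using j.2 l
      refine le_trans (le_of_eq ?_) (le_iSup _ (⟨Function.update j.1 b (p : ℕ), hval⟩ :
        {f : ℕ → ℕ // ∀ l, f l < n}))
      rw [← Submodule.map_comp, ← Matrix.mulVecLin_mul]
      congr 1
      rw [descProd_succ_of_le _ (le_of_lt hlt)]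
      simp only [Function.update_self]
      rw [descProd_congr (E := fun l => A l ^ j.1 l)
        (F := fun l => A l ^ Function.update j.1 b (p : ℕ) l) b
        (fun l _ h2 => by simp [Function.update_of_ne (Nat.ne_of_lt h2)])]
    · have hkb' : k = b := le_antisymm (Nat.lt_succ_iff.mp hkb) hge
      subst hkb'
      have h1 : descProd E (k + 1) (k + 1) = 1 := descProd_self E (k + 1)
      rw [h1, one_mul]
      refine le_trans (le_of_eq ?_) (le_iSup _ (⟨fun _ => (i : ℕ), fun _ => i.isLt⟩ :
        {f : ℕ → ℕ // ∀ l, f l < n}))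
      congr 1
      rw [descProd_succ_of_le _ (le_refl k), descProd_self, mul_one]

/-- For all durations `h`, the reachable subspace `Ω_{h}` is contained in `Ω̄`. -/
theorem reachable_le_omegaBar {n N : ℕ} (hN : 1 ≤ N) (m : ℕ → ℕ)
    (A : ℕ → Matrix (Fin n) (Fin n) ℝ) (B : ∀ i, Matrix (Fin n) (Fin (m i)) ℝ)
    (h : ℕ → ℝ) :
    let E : ℕ → Matrix (Fin n) (Fin n) ℝ := fun i => NormedSpace.exp (h i • A i)
    let Ω : Submodule ℝ (Fin n → ℝ) := ctrlSub (A (N - 1)) (B (N - 1)) ⊔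
      ⨆ j ∈ Finset.Ico 1 N, Submodule.map (descProd E j N).mulVecLin
        (ctrlSub (A (j - 1)) (B (j - 1)))
    Ω ≤ omegaBar N m A B := by
  intro E Ω
  rcases Nat.eq_zero_or_pos n with rfl | hn
  · intro x _
    have hx : x = 0 := funext fun i => i.elim0
    rw [hx]; exact zero_mem _
  have hE : ∀ b, E b ∈ Submodule.span ℝ (Set.range fun p : Fin n => A b ^ (p : ℕ)) := by
    intro b
    refine Submodule.span_le.mpr ?_ (myExp_mem_span (h b • A b))
    rintro _ ⟨p, rfl⟩
    show (h b • A b) ^ (p : ℕ) ∈ _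
    rw [smul_pow]
    exact Submodule.smul_mem _ _ (Submodule.subset_span ⟨p, rfl⟩)
  have main : ∀ k, k < N →
      Submodule.map (descProd E (k + 1) N).mulVecLin (ctrlSub (A k) (B k)) ≤
        omegaBar N m A B := by
    intro k hk
    rw [ctrlSub, Submodule.map_iSup]
    refine iSup_le fun i => ?_
    rw [← Submodule.map_comp, ← Matrix.mulVecLin_mul]
    refine le_trans (myKey A E hE _ k i N hk) ?_
    refine iSup_le fun j => ?_
    exact le_iSup₂_of_le k (Finset.mem_range.mpr hk)
      (le_iSup (fun j : {f : ℕ → ℕ // ∀ l, f l < n} =>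
        Submodule.map (descProd (fun i => A i ^ j.1 i) k N).mulVecLin
          (LinearMap.range (B k).mulVecLin)) j)
  refine sup_le ?_ ?_
  · have hN1 : N - 1 + 1 = N := Nat.succ_pred_eq_of_pos hN
    have h2 := main (N - 1) (by omega)
    rwa [hN1, descProd_self, Matrix.mulVecLin_one, Submodule.map_id] at h2
  · refine iSup₂_le fun j hj => ?_
    obtain ⟨hj1, hj2⟩ := Finset.mem_Ico.mp hj
    have h1 : j - 1 + 1 = j := Nat.succ_pred_eq_of_pos hj1
    have h2 := main (j - 1) (by omega)
    rwa [h1] at h2
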